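/- arXiv:1202.2097 — 8 statements merged into one kernel-verified Lean document; each statement's English description precedes it below -/
import Mathlib

section
/- Suppose for each pair (a,b) with a+b ≥ 1, w^A(a,b) is defined as the minimum of the interval I(a,b) = [w^A(a-1,b), w^A(a,b-1) + Δ⊕B(a,b)] ∩ [min(W₀,W₁), max(W₀,W₁)] where W₁ ≥ w^A(a-1,b) and W₀ ≤ w^A(a,b-1). If inductively w^A(a-2,b+1) ≤ w^A(a-1,b), then w^A(a-1,b+1) ≤ w^A(a-1,b) ≤ w^A(a,b), establishing the cross-monotonicity w^A(a,b) ≥ w^A(a-1,b+1). -/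
/-- Suppose for each pair `(a,b)` with `a+b ≥ 1`, `w^A(a,b)` is defined
as the minimum of the interval
`I(a,b) = [w^A(a-1,b), w^A(a,b-1)+Δ⊕B(a,b)] ∩ [min(W₀,W₁), max(W₀,W₁)]`,
so that (the intersection being nonempty) `w^A(a,b) = max (w^A(a-1,b)) (min W₀ W₁)`,
where `W₁ = W₁(a,b) ≥ w^A(a-1,b)` and `W₀ = W₀(a,b) ≤ w^A(a,b-1)`.
If inductively `w^A(a-2,b+1) ≤ w^A(a-1,b)`, then
`w^A(a-1,b+1) ≤ w^A(a-1,b) ≤ w^A(a,b)`, i.e. cross-monotonicity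
`w^A(a,b) ≥ w^A(a-1,b+1)` holds.
(Indices are shifted: the pair `(a,b)` of the claim is represented as `(a+2, b)`, so
`a-1 ↦ a+1` and `a-2 ↦ a`.) -/
theorem stmt4 (wA W0 W1 : ℕ → ℕ → ℝ) (a b : ℕ)
    (hdef_ab : wA (a + 2) b = max (wA (a + 1) b) (min (W0 (a + 2) b) (W1 (a + 2) b)))
    (hdef_prev : wA (a + 1) (b + 1) =
      max (wA a (b + 1)) (min (W0 (a + 1) (b + 1)) (W1 (a + 1) (b + 1))))
    (hW1_ab : wA (a + 1) b ≤ W1 (a + 2) b)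
    (hW1_prev : wA a (b + 1) ≤ W1 (a + 1) (b + 1))
    (hW0_prev : W0 (a + 1) (b + 1) ≤ wA (a + 1) b)
    (hind : wA a (b + 1) ≤ wA (a + 1) b) :
    wA (a + 1) (b + 1) ≤ wA (a + 1) b ∧ wA (a + 1) b ≤ wA (a + 2) b := by
  constructor
  · rw [hdef_prev]
    exact max_le hind (le_trans (min_le_left _ _) hW0_prev)
  · rw [hdef_ab]; exact le_max_left _ _
end

section
/- Let w : ℕ → ℝ≥0 be nondecreasing and such that w(t+1) - w(t) ≤ w(t) - w(t-1) for all t ≥ 1 (discrete concavity), with w(0)=0. Then for all integers 0 ≤ b ≤ t, (b/t)·w(t) ≤ ((b+1)/(t+1))·w(t+1). Consequently the uniform random greedy mechanism, whose agent utilities equal (b/t)·w(t), is monotone in each agent's bid. -/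
/-- Let `w : ℕ → ℝ≥0` be nondecreasing, discretely concave
(`w(t+1) - w(t) ≤ w(t) - w(t-1)` for `t ≥ 1`), with `w(0) = 0`.  Then for all integers
`0 ≤ b ≤ t`, `(b/t)·w(t) ≤ ((b+1)/(t+1))·w(t+1)`: the utilities `(b/t)·w(t)` of the
uniform random greedy mechanism are monotone in each agent's bid. -/
theorem stmt7 (w : ℕ → ℝ)
    (hnonneg : ∀ t, 0 ≤ w t)
    (hmono : ∀ t, w t ≤ w (t + 1))
    (hconc : ∀ t, w (t + 2) - w (t + 1) ≤ w (t + 1) - w t)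
    (hzero : w 0 = 0) :
    ∀ b t : ℕ, b ≤ t →
      ((b : ℝ) / (t : ℝ)) * w t ≤ (((b : ℝ) + 1) / ((t : ℝ) + 1)) * w (t + 1) := by
  intro b t hbt
  rcases Nat.eq_zero_or_pos t with ht | ht
  · subst ht
    interval_cases b
    simp [hzero]
    have := hnonneg 1; linarith
  · have ht' : (0 : ℝ) < t := by exact_mod_cast ht
    have h1 : (b : ℝ) / t ≤ ((b : ℝ) + 1) / ((t : ℝ) + 1) := by
      rw [div_le_div_iff₀ ht' (by linarith)]
      have : (b : ℝ) ≤ t := by exact_mod_cast hbt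
      nlinarith
    have h2 : 0 ≤ (b : ℝ) / t := by positivity
    exact mul_le_mul h1 (hmono t) (hnonneg t) (by positivity)
end

section
/- Let f : 2^U → ℝ≥0 be monotone nondecreasing and submodular with f(∅)=0, and let G_t be the greedy set of size t. Then f(G_t) ≥ (1 - (1-1/t)^t) · max_{|S|=t} f(S) ≥ (1 - 1/e) · max_{|S|=t} f(S). -/
/-- Nemhauser–Wolsey–Fisher: Let `f : 2^U → ℝ≥0` be monotone
nondecreasing and submodular with `f(∅) = 0`, and let `G_t` be the greedy set of
size `t` (each step adds an element of maximum marginal gain).  Then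
`f(G_t) ≥ (1 - (1 - 1/t)^t) · max_{|S| = t} f S ≥ (1 - 1/e) · max_{|S| = t} f S`. -/
theorem stmt9 {U : Type*} [Fintype U] [DecidableEq U]
    (f : Finset U → ℝ)
    (hnonneg : ∀ S, 0 ≤ f S)
    (hempty : f ∅ = 0)
    (hmono : ∀ S T : Finset U, S ⊆ T → f S ≤ f T)
    (hsub : ∀ S T : Finset U, S ⊆ T → ∀ c : U,
      f (insert c T) - f T ≤ f (insert c S) - f S)
    (G : ℕ → Finset U)
    (hG0 : G 0 = ∅)
    (t : ℕ) (ht : 1 ≤ t) (hcard : t ≤ Fintype.card U)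
    (hstep : ∀ n < t, ∃ c, c ∉ G n ∧ G (n + 1) = insert c (G n) ∧
      ∀ d : U, f (insert d (G n)) - f (G n) ≤ f (insert c (G n)) - f (G n)) :
    ∀ S : Finset U, S.card = t →
      (1 - (1 - 1 / (t : ℝ)) ^ t) * f S ≤ f (G t) ∧
      (1 - 1 / Real.exp 1) * f S ≤ (1 - (1 - 1 / (t : ℝ)) ^ t) * f S := by
  intro S hS
  have ht0 : (0:ℝ) < t := by exact_mod_cast ht
  have h1t : (0:ℝ) ≤ 1 - 1 / (t:ℝ) := by
    rw [sub_nonneg, div_le_one ht0]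
    exact_mod_cast ht
  -- fill-in lemma from submodularity
  have fill : ∀ (T A : Finset U),
      f (T ∪ A) - f A ≤ ∑ e ∈ T, (f (insert e A) - f A) := by
    intro T A
    induction T using Finset.induction_on with
    | empty => simp
    | @insert x T' hx ih =>
      rw [Finset.sum_insert hx, Finset.insert_union]
      have h1 : f (insert x (T' ∪ A)) - f (T' ∪ A) ≤ f (insert x A) - f A :=
        hsub A (T' ∪ A) Finset.subset_union_right x
      linarith
  -- key per-step inequality
  have key : ∀ n, n < t →
      f S - f (G (n+1)) ≤ (1 - 1/(t:ℝ)) * (f S - f (G n)) := by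
    intro n hn
    obtain ⟨c, hc, hGn1, hmax⟩ := hstep n hn
    set δ := f (G (n+1)) - f (G n) with hδ
    have hterm : ∀ e ∈ S, f (insert e (G n)) - f (G n) ≤ δ := by
      intro e _
      rw [hδ, hGn1]
      exact hmax e
    have hsum : ∑ e ∈ S, (f (insert e (G n)) - f (G n)) ≤ (t:ℝ) * δ := by
      calc ∑ e ∈ S, (f (insert e (G n)) - f (G n)) ≤ S.card • δ :=
            Finset.sum_le_card_nsmul _ _ _ hterm
        _ = (t:ℝ) * δ := by rw [hS, nsmul_eq_mul]
    have hfS : f S ≤ f (S ∪ G n) := hmono _ _ Finset.subset_union_left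
    have hX : f S - f (G n) ≤ (t:ℝ) * δ := by
      have := fill S (G n)
      linarith
    have hdiv : (f S - f (G n)) / (t:ℝ) ≤ δ := by
      rw [div_le_iff₀ ht0]; linarith
    have hring : (1 - 1/(t:ℝ)) * (f S - f (G n))
        = (f S - f (G n)) - (f S - f (G n)) / (t:ℝ) := by ring
    rw [hring]
    have : f S - f (G (n+1)) = (f S - f (G n)) - δ := by rw [hδ]; ring
    linarith
  -- induction
  have main : ∀ n, n ≤ t → f S - f (G n) ≤ (1 - 1/(t:ℝ))^n * f S := by
    intro n
    induction n with
    | zero => intro _; simp [hG0, hempty]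
    | succ n ih =>
      intro hn1
      have hn : n < t := hn1
      have h1 := key n hn
      have h2 := ih (le_of_lt hn)
      have h3 : (1 - 1/(t:ℝ)) * (f S - f (G n))
          ≤ (1 - 1/(t:ℝ)) * ((1 - 1/(t:ℝ))^n * f S) :=
        mul_le_mul_of_nonneg_left h2 h1t
      calc f S - f (G (n+1)) ≤ (1 - 1/(t:ℝ)) * (f S - f (G n)) := h1
        _ ≤ (1 - 1/(t:ℝ)) * ((1 - 1/(t:ℝ))^n * f S) := h3
        _ = (1 - 1/(t:ℝ))^(n+1) * f S := by ring
  have hfinal := main t le_rfl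
  constructor
  · nlinarith [hfinal]
  · -- (1 - 1/t)^t ≤ 1/e
    have h1 : 1 - 1/(t:ℝ) ≤ Real.exp (-(1/(t:ℝ))) := by
      have := Real.add_one_le_exp (-(1/(t:ℝ)))
      linarith
    have h2 : (1 - 1/(t:ℝ))^t ≤ Real.exp (-(1/(t:ℝ)))^t :=
      pow_le_pow_left₀ h1t h1 t
    have h3 : Real.exp (-(1/(t:ℝ)))^t = Real.exp (-1) := by
      rw [← Real.exp_nat_mul]
      congr 1
      field_simp
    have h4 : (1 - 1/(t:ℝ))^t ≤ 1 / Real.exp 1 := by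
      rw [h3] at h2
      rwa [Real.exp_neg, ← one_div] at h2
    have := hnonneg S
    nlinarith
end

section
/- (Locally greedy 2-approximation for partition matroids) Let g be a monotone nondecreasing submodular function on subsets of E = E_1 ∪ ... ∪ E_k (disjoint) with g(∅)=0, and cardinality bounds d_1,...,d_k. Consider any algorithm that processes the parts in an arbitrary interleaved order, at each step adding to the current solution an element of some designated part E_i (not yet having d_i elements selected from it) maximizing the marginal gain of g. The resulting independent set X satisfies 2·g(X) ≥ g(O) for every independent set O (i.e., every O with |O ∩ E_i| ≤ d_i for all i). -/
open Finset

theorem stmt10_marginal {E : Type*} [DecidableEq E] (g : Finset E → ℝ)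
    (hsub : ∀ S T : Finset E, S ⊆ T → ∀ c : E,
      g (insert c T) - g T ≤ g (insert c S) - g S)
    (S T : Finset E) :
    g (S ∪ T) ≤ g T + ∑ e ∈ S \ T, (g (insert e T) - g T) := by
  induction S using Finset.induction_on with
  | empty => simp
  | @insert a S ha ih =>
    by_cases hat : a ∈ T
    · rw [insert_union, insert_eq_self.2 (mem_union_right _ hat),
        insert_sdiff_of_mem _ hat]
      exact ih
    · have hnot : a ∉ S \ T := fun h => ha (mem_sdiff.mp h).1
      rw [insert_union, insert_sdiff_of_notMem _ hat, sum_insert hnot]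
      have h1 := hsub T (S ∪ T) subset_union_right a
      linarith



open Finset in
/-- Locally greedy 2-approximation for partition matroids: Let `g` be a
monotone nondecreasing submodular function with `g(∅)=0` on subsets of a ground set
partitioned into parts (given by `part : E → Fin k`) with cardinality bounds `d i`.
The locally greedy algorithm fixes an arbitrary interleaved sequence `π` of part
indices containing `d i` copies of index `i`, and at step `j` adds an as-yet-unchosen
element of part `π j` maximizing the marginal gain of `g`.  The resulting independent
set `X N` (where `N = ∑ i, d i`) satisfies `2 · g(X N) ≥ g(O)` for every independent
set `O`, i.e. every `O` with `|O ∩ E_i| ≤ d i` for all `i`. -/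
theorem stmt10 {E : Type*} [Fintype E] [DecidableEq E]
    {k : ℕ} (part : E → Fin k) (d : Fin k → ℕ)
    (g : Finset E → ℝ)
    (hnonneg : ∀ S, 0 ≤ g S)
    (hempty : g ∅ = 0)
    (hmono : ∀ S T : Finset E, S ⊆ T → g S ≤ g T)
    (hsub : ∀ S T : Finset E, S ⊆ T → ∀ c : E,
      g (insert c T) - g T ≤ g (insert c S) - g S)
    (N : ℕ) (hN : N = ∑ i, d i)
    (π : ℕ → Fin k)
    (hπ : ∀ i : Fin k, ((Finset.range N).filter (fun j => π j = i)).card = d i)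
    (X : ℕ → Finset E)
    (hX0 : X 0 = ∅)
    (hstep : ∀ j < N, ∃ c : E, part c = π j ∧ c ∉ X j ∧ X (j + 1) = insert c (X j) ∧
      ∀ e : E, part e = π j → e ∉ X j →
        g (insert e (X j)) - g (X j) ≤ g (insert c (X j)) - g (X j)) :
    ∀ O : Finset E, (∀ i : Fin k, (O.filter (fun e => part e = i)).card ≤ d i) →
      g O ≤ 2 * g (X N) := by
  intro O hO
  -- the chain X 0 ⊆ X 1 ⊆ ... ⊆ X N
  have hstep' : ∀ j < N, X j ⊆ X (j + 1) := by
    intro j hj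
    obtain ⟨c, _, _, hXj, _⟩ := hstep j hj
    rw [hXj]; exact subset_insert _ _
  have hchain : ∀ a b : ℕ, a ≤ b → b ≤ N → X a ⊆ X b := by
    intro a b hab hbN
    induction b with
    | zero => simp_all
    | succ n ih =>
      rcases Nat.lt_or_ge a (n + 1) with h | h
      · exact (ih (Nat.lt_succ_iff.mp h) (le_of_lt (Nat.lt_of_succ_le hbN))).trans
          (hstep' n (Nat.lt_of_succ_le hbN))
      · have : a = n + 1 := le_antisymm hab h
        rw [this]
  -- gains
  set gain : ℕ → ℝ := fun j => g (X (j + 1)) - g (X j) with hgain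
  have hgain0 : ∀ j < N, 0 ≤ gain j := fun j hj =>
    sub_nonneg.2 (hmono _ _ (hstep' j hj))
  -- key per-element bound
  set marg : E → ℝ := fun e => g (insert e (X N)) - g (X N) with hmarg
  have hkey : ∀ e ∈ O \ X N, ∀ j < N, π j = part e → marg e ≤ gain j := by
    intro e he j hj hπj
    obtain ⟨c, hc, hcX, hXj1, hmax⟩ := hstep j hj
    have heXj : e ∉ X j := fun h =>
      (mem_sdiff.mp he).2 (hchain j N (le_of_lt hj) le_rfl h)
    have h1 := hsub (X j) (X N) (hchain j N (le_of_lt hj) le_rfl) e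
    have h2 := hmax e hπj.symm heXj
    simp only [hmarg, hgain, hXj1]
    linarith
  -- per-part sum bound
  have hpart : ∀ i : Fin k,
      ∑ e ∈ (O \ X N).filter (fun e => part e = i), marg e ≤
      ∑ j ∈ (Finset.range N).filter (fun j => π j = i), gain j := by
    intro i
    set A := (O \ X N).filter (fun e => part e = i) with hA
    set B := (Finset.range N).filter (fun j => π j = i) with hB
    have hgainB : ∀ j ∈ B, 0 ≤ gain j := fun j hj =>
      hgain0 j (mem_range.mp (mem_filter.mp hj).1)
    rcases A.eq_empty_or_nonempty with hAe | hAne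
    · rw [hAe]
      simp only [sum_empty]
      exact Finset.sum_nonneg hgainB
    · have hcard : A.card ≤ B.card := by
        rw [hB, hπ i]
        calc A.card ≤ (O.filter (fun e => part e = i)).card :=
              card_le_card (filter_subset_filter _ sdiff_subset)
          _ ≤ d i := hO i
      have hBne : B.Nonempty := Finset.card_pos.mp (lt_of_lt_of_le (Finset.card_pos.mpr hAne) hcard)
      set m := B.inf' hBne gain with hm
      have hmge : 0 ≤ m := by
        obtain ⟨j, hjB, hjm⟩ := Finset.exists_mem_eq_inf' hBne gain
        rw [hm, hjm]
        exact hgainB j hjB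
      have h1 : ∑ e ∈ A, marg e ≤ A.card • m := by
        apply Finset.sum_le_card_nsmul
        intro e heA
        apply Finset.le_inf'
        intro j hjB
        obtain ⟨heO, hei⟩ := mem_filter.mp heA
        obtain ⟨hjr, hji⟩ := mem_filter.mp hjB
        exact hkey e heO j (mem_range.mp hjr) (hji.trans hei.symm)
      have h2 : (A.card : ℝ) * m ≤ (B.card : ℝ) * m :=
        mul_le_mul_of_nonneg_right (by exact_mod_cast hcard) hmge
      have h3 : B.card • m ≤ ∑ j ∈ B, gain j :=
        Finset.card_nsmul_le_sum B gain m (fun j hj => Finset.inf'_le _ hj)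
      rw [nsmul_eq_mul] at h1 h3
      linarith
  -- assemble
  have hsum1 : ∑ e ∈ O \ X N, marg e ≤ ∑ j ∈ Finset.range N, gain j := by
    rw [← Finset.sum_fiberwise (O \ X N) part marg,
        ← Finset.sum_fiberwise (Finset.range N) π gain]
    exact Finset.sum_le_sum fun i _ => hpart i
  have htel : ∑ j ∈ Finset.range N, gain j = g (X N) := by
    rw [hgain, Finset.sum_range_sub (fun j => g (X j)), hX0, hempty, sub_zero]
  have hub := stmt10_marginal g hsub O (X N)
  have h0 : g O ≤ g (O ∪ X N) := hmono _ _ subset_union_left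
  have : ∑ e ∈ O \ X N, marg e = ∑ e ∈ O \ X N, (g (insert e (X N)) - g (X N)) := rfl
  rw [htel] at hsum1
  linarith [hsum1, this ▸ hub]
end

section
/- If there are k ≥ 3 agents satisfying the Agent Indifference and Mechanism Indifference conditions (with each agent's utility zero when its own allocation is empty), then the agents are anonymous: f_i(S_1,...,S_k) = f_{π(i)}(S_{π(1)},...,S_{π(k)}) for every permutation π, every agent i, and all set tuples. -/
open Set

private def alloc12 {U : Type*} {k : ℕ} (i j : Fin k) (A B : Set U) : Fin k → Set U :=
  fun t => if t = i then A else if t = j then B else ∅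

private lemma alloc12_union {U : Type*} {k : ℕ} (i j : Fin k) (hji : j ≠ i) (A B : Set U) :
    (⋃ t, alloc12 i j A B t) = A ∪ B := by
  ext x
  simp only [mem_iUnion, mem_union, alloc12]
  constructor
  · rintro ⟨t, ht⟩
    split_ifs at ht with h1 h2
    · exact Or.inl ht
    · exact Or.inr ht
    · exact ht.elim
  · rintro (h | h)
    · exact ⟨i, by simp [h]⟩
    · exact ⟨j, by simp [hji, h]⟩

private lemma alloc12_uni {U : Type*} {k : ℕ} (i j : Fin k) (hji : j ≠ i) (A B : Set U) :
    (⋃ t ∈ ({t | t ≠ i} : Set (Fin k)), alloc12 i j A B t) = B := by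
  ext x
  simp only [mem_iUnion, mem_setOf_eq, exists_prop, alloc12]
  constructor
  · rintro ⟨t, hti, ht⟩
    rw [if_neg hti] at ht
    by_cases h2 : t = j
    · rwa [if_pos h2] at ht
    · rw [if_neg h2] at ht; exact ht.elim
  · intro h
    exact ⟨j, hji, by simp [hji, h]⟩

private lemma alloc12_uni' {U : Type*} {k : ℕ} (i j : Fin k) (hij : i ≠ j) (A B : Set U) :
    (⋃ t ∈ ({t | t ≠ j} : Set (Fin k)), alloc12 i j A B t) = A := by
  ext x
  simp only [mem_iUnion, mem_setOf_eq, exists_prop, alloc12]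
  constructor
  · rintro ⟨t, htj, ht⟩
    by_cases h1 : t = i
    · rwa [if_pos h1] at ht
    · rw [if_neg h1, if_neg htj] at ht; exact ht.elim
  · intro h
    exact ⟨i, hij, by simp [h]⟩

open Set in
/-- If there are `k ≥ 3` agents satisfying Agent Indifference (each
agent's utility depends only on its own set and the union of the others' sets) and
Mechanism Indifference (total welfare depends only on the union of all allocated
sets), with each agent's utility zero when its own allocation is empty, then the
agents are anonymous: `f_{π(i)}` applied to the permuted allocation (agent `π(j)`
receiving set `S_j`) equals `f_i(S₁,…,S_k)` for every permutation `π`. -/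
theorem stmt12 {U : Type*} (k : ℕ) (hk : 3 ≤ k)
    (f : Fin k → (Fin k → Set U) → ℝ)
    (hMeI : ∀ S S' : Fin k → Set U, (⋃ i, S i) = (⋃ i, S' i) →
      (∑ i, f i S) = (∑ i, f i S'))
    (hAgI : ∀ i : Fin k, ∀ S S' : Fin k → Set U, S i = S' i →
      (⋃ j ∈ ({j | j ≠ i} : Set (Fin k)), S j) = (⋃ j ∈ ({j | j ≠ i} : Set (Fin k)), S' j) →
      f i S = f i S') 
    (hzero : ∀ i : Fin k, ∀ S : Fin k → Set U, S i = ∅ → f i S = 0) :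
    ∀ (π : Equiv.Perm (Fin k)) (i : Fin k) (S : Fin k → Set U),
      f i S = f (π i) (fun j => S (π.symm j)) := by
  have hkk : 3 ≤ Fintype.card (Fin k) := by simpa using hk
  -- there is always a third agent
  have exj : ∀ i i' : Fin k, ∃ j : Fin k, j ≠ i ∧ j ≠ i' := by
    intro i i'
    have hcard : ({i, i'} : Finset (Fin k)).card ≤ 2 :=
      (Finset.card_insert_le _ _).trans (by simp)
    have h : (({i, i'} : Finset (Fin k))ᶜ).Nonempty := by
      rw [← Finset.card_pos, Finset.card_compl]
      omega
    obtain ⟨j, hj⟩ := h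
    simp only [Finset.mem_compl, Finset.mem_insert, Finset.mem_singleton, not_or] at hj
    exact ⟨j, hj.1, hj.2⟩
  -- sum over an alloc12 configuration has only two nonzero terms
  have hsum : ∀ (i j : Fin k) (A B : Set U), j ≠ i →
      (∑ t, f t (alloc12 i j A B)) = f i (alloc12 i j A B) + f j (alloc12 i j A B) := by
    intro i j A B hji
    rw [← Finset.sum_subset (Finset.subset_univ ({i, j} : Finset (Fin k)))]
    · rw [Finset.sum_pair (Ne.symm hji)]
    · intro x _ hx
      simp only [Finset.mem_insert, Finset.mem_singleton, not_or] at hx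
      exact hzero x _ (by simp [alloc12, hx.1, hx.2])
  -- utilities of distinct agents agree on canonical two-set configurations
  have key2 : ∀ (i i' j : Fin k) (A B : Set U), j ≠ i → j ≠ i' → i ≠ i' →
      f i (alloc12 i j A B) = f i' (alloc12 i' j A B) := by
    intro i i' j A B hji hji' hii'
    have hM := hMeI (alloc12 i j A B) (alloc12 i' j A B)
      (by rw [alloc12_union i j hji, alloc12_union i' j hji'])
    have hj : f j (alloc12 i j A B) = f j (alloc12 i' j A B) := by
      apply hAgI
      · simp [alloc12, hji, hji']
      · rw [alloc12_uni' i j (Ne.symm hji), alloc12_uni' i' j (Ne.symm hji')]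
    have h1 := hsum i j A B hji
    have h2 := hsum i' j A B hji'
    rw [h1, h2] at hM
    linarith
  -- the key anonymity lemma
  have key : ∀ (i i' : Fin k) (S S' : Fin k → Set U), S i = S' i' →
      (⋃ t ∈ ({t | t ≠ i} : Set (Fin k)), S t) = (⋃ t ∈ ({t | t ≠ i'} : Set (Fin k)), S' t) →
      f i S = f i' S' := by
    intro i i' S S' hown huni
    by_cases h : i = i'
    · subst h
      exact hAgI i S S' hown huni
    · obtain ⟨j, hj1, hj2⟩ := exj i i'
      have e1 : f i S = f i (alloc12 i j (S i) (⋃ t ∈ ({t | t ≠ i} : Set (Fin k)), S t)) := by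
        apply hAgI
        · simp [alloc12]
        · rw [alloc12_uni i j hj1]
      have e2 : f i' (alloc12 i' j (S i) (⋃ t ∈ ({t | t ≠ i} : Set (Fin k)), S t)) = f i' S' := by
        apply hAgI
        · simpa [alloc12] using hown
        · rw [alloc12_uni i' j hj2]; exact huni
      rw [e1, key2 i i' j _ _ hj1 hj2 h, e2]
  intro π i S
  apply key i (π i) S (fun j => S (π.symm j))
  · simp
  · ext x
    simp only [mem_iUnion, mem_setOf_eq, exists_prop]
    constructor
    · rintro ⟨t, hti, hx⟩
      exact ⟨π t, fun h => hti (π.injective h), by simpa using hx⟩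
    · rintro ⟨t, ht, hx⟩
      exact ⟨π.symm t, fun h => ht ((Equiv.symm_apply_eq π).mp h), hx⟩
end

section
/- For two players, Mechanism Indifference does not imply anonymity: the functions on ground set {a,b} defined by f₁(x,∅)=f₂(∅,x)=2 for singletons x, f₁({a,b},∅)=f₂(∅,{a,b})=3, f₁(x,y)=1.6 and f₂(x,y)=1.4 for disjoint singletons x,y, with all utilities 0 when the player's own set is empty nontrivially(with the other nonempty assigned the listed values), have submodular nondecreasing sum and satisfy MeI and adverse competition, but f₁(x,y) ≠ f₂(y,x), so anonymity fails. -/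
/-- For two players, Mechanism Indifference does not imply anonymity.
On ground set `{a,b} = Fin 2`, the utilities with `f₁(x,∅)=f₂(∅,x)=2` for singletons,
`f₁({a,b},∅)=f₂(∅,{a,b})=3`, `f₁(x,y)=1.6`, `f₂(x,y)=1.4` for disjoint singletons,
and `0` whenever the player's own set is empty, have a nondecreasing submodular sum,
satisfy MeI and adverse competition, yet `f₁(x,y) ≠ f₂(y,x)`: anonymity fails. -/
theorem stmt13 (f₁ f₂ : Finset (Fin 2) → Finset (Fin 2) → ℝ)
    (h1e : ∀ T, f₁ ∅ T = 0) (h2e : ∀ S, f₂ S ∅ = 0)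
    (h1s : ∀ x : Fin 2, f₁ {x} ∅ = 2) (h2s : ∀ x : Fin 2, f₂ ∅ {x} = 2)
    (h1f : f₁ Finset.univ ∅ = 3) (h2f : f₂ ∅ Finset.univ = 3)
    (h1xy : ∀ x y : Fin 2, x ≠ y → f₁ {x} {y} = 1.6)
    (h2xy : ∀ x y : Fin 2, x ≠ y → f₂ {x} {y} = 1.4) :
    -- the welfare f₁ + f₂ is nondecreasing in each player's set
    (∀ S S' T : Finset (Fin 2), S ⊆ S' → Disjoint S' T →
      f₁ S T + f₂ S T ≤ f₁ S' T + f₂ S' T) ∧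
    (∀ S T T' : Finset (Fin 2), T ⊆ T' → Disjoint S T' →
      f₁ S T + f₂ S T ≤ f₁ S T' + f₂ S T') ∧
    -- the welfare f₁ + f₂ is submodular in each player's set
    (∀ S S' T : Finset (Fin 2), S ⊆ S' → ∀ e, Disjoint (insert e S') T →
      (f₁ (insert e S') T + f₂ (insert e S') T) - (f₁ S' T + f₂ S' T) ≤
      (f₁ (insert e S) T + f₂ (insert e S) T) - (f₁ S T + f₂ S T)) ∧
    (∀ S T T' : Finset (Fin 2), T ⊆ T' → ∀ e, Disjoint S (insert e T') →
      (f₁ S (insert e T') + f₂ S (insert e T')) - (f₁ S T' + f₂ S T') ≤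
      (f₁ S (insert e T) + f₂ S (insert e T)) - (f₁ S T + f₂ S T)) ∧
    -- Mechanism Indifference: the welfare depends only on the union
    (∀ S T S' T' : Finset (Fin 2), Disjoint S T → Disjoint S' T' → S ∪ T = S' ∪ T' →
      f₁ S T + f₂ S T = f₁ S' T' + f₂ S' T') ∧
    -- adverse competition
    (∀ S T T' : Finset (Fin 2), T ⊆ T' → Disjoint S T' → f₁ S T' ≤ f₁ S T) ∧
    (∀ S S' T : Finset (Fin 2), S ⊆ S' → Disjoint S' T → f₂ S' T ≤ f₂ S T) ∧
    -- anonymity fails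
    ¬ (∀ S T : Finset (Fin 2), Disjoint S T → f₁ S T = f₂ T S) := by
  have hS : ∀ S : Finset (Fin 2), S = ∅ ∨ S = {0} ∨ S = {1} ∨ S = Finset.univ := by decide
  have hE : ∀ e : Fin 2, e = 0 ∨ e = 1 := by decide
  have a01 : f₁ {0} {1} = 1.6 := h1xy 0 1 (by decide)
  have a10 : f₁ {1} {0} = 1.6 := h1xy 1 0 (by decide)
  have b01 : f₂ {0} {1} = 1.4 := h2xy 0 1 (by decide)
  have b10 : f₂ {1} {0} = 1.4 := h2xy 1 0 (by decide)
  have i00 : insert (0 : Fin 2) ({0} : Finset (Fin 2)) = {0} := by decide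
  have i01 : insert (0 : Fin 2) ({1} : Finset (Fin 2)) = Finset.univ := by decide
  have i10 : insert (1 : Fin 2) ({0} : Finset (Fin 2)) = Finset.univ := by decide
  have i11 : insert (1 : Fin 2) ({1} : Finset (Fin 2)) = {1} := by decide
  have i0u : insert (0 : Fin 2) (Finset.univ : Finset (Fin 2)) = Finset.univ := by decide
  have i1u : insert (1 : Fin 2) (Finset.univ : Finset (Fin 2)) = Finset.univ := by decide
  refine ⟨?_, ?_, ?_, ?_, ?_, ?_, ?_, ?_⟩
  · intro S S' T hss hd
    rcases hS S with rfl | rfl | rfl | rfl <;> rcases hS S' with rfl | rfl | rfl | rfl <;>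
      rcases hS T with rfl | rfl | rfl | rfl <;>
      first
        | exact absurd hss (by decide)
        | exact absurd hd (by decide)
        | norm_num [h1e, h2e, h1s, h2s, h1f, h2f, a01, a10, b01, b10]
  · intro S T T' htt hd
    rcases hS S with rfl | rfl | rfl | rfl <;> rcases hS T with rfl | rfl | rfl | rfl <;>
      rcases hS T' with rfl | rfl | rfl | rfl <;>
      first
        | exact absurd htt (by decide)
        | exact absurd hd (by decide)
        | norm_num [h1e, h2e, h1s, h2s, h1f, h2f, a01, a10, b01, b10]
  · intro S S' T hss e hd
    rcases hS S with rfl | rfl | rfl | rfl <;> rcases hS S' with rfl | rfl | rfl | rfl <;>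
      rcases hS T with rfl | rfl | rfl | rfl <;> rcases hE e with rfl | rfl <;>
      first
        | exact absurd hss (by decide)
        | exact absurd hd (by decide)
        | norm_num [i00, i01, i10, i11, i0u, i1u,
            h1e, h2e, h1s, h2s, h1f, h2f, a01, a10, b01, b10]
  · intro S T T' htt e hd
    rcases hS S with rfl | rfl | rfl | rfl <;> rcases hS T with rfl | rfl | rfl | rfl <;>
      rcases hS T' with rfl | rfl | rfl | rfl <;> rcases hE e with rfl | rfl <;>
      first
        | exact absurd htt (by decide)
        | exact absurd hd (by decide)
        | norm_num [i00, i01, i10, i11, i0u, i1u,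
            h1e, h2e, h1s, h2s, h1f, h2f, a01, a10, b01, b10]
  · intro S T S' T' hd hd' hu
    rcases hS S with rfl | rfl | rfl | rfl <;> rcases hS T with rfl | rfl | rfl | rfl <;>
      rcases hS S' with rfl | rfl | rfl | rfl <;> rcases hS T' with rfl | rfl | rfl | rfl <;>
      first
        | exact absurd hd (by decide)
        | exact absurd hd' (by decide)
        | exact absurd hu (by decide)
        | norm_num [h1e, h2e, h1s, h2s, h1f, h2f, a01, a10, b01, b10]
  · intro S T T' htt hd
    rcases hS S with rfl | rfl | rfl | rfl <;> rcases hS T with rfl | rfl | rfl | rfl <;>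
      rcases hS T' with rfl | rfl | rfl | rfl <;>
      first
        | exact absurd htt (by decide)
        | exact absurd hd (by decide)
        | norm_num [h1e, h2e, h1s, h2s, h1f, h2f, a01, a10, b01, b10]
  · intro S S' T hss hd
    rcases hS S with rfl | rfl | rfl | rfl <;> rcases hS S' with rfl | rfl | rfl | rfl <;>
      rcases hS T with rfl | rfl | rfl | rfl <;>
      first
        | exact absurd hss (by decide)
        | exact absurd hd (by decide)
        | norm_num [h1e, h2e, h1s, h2s, h1f, h2f, a01, a10, b01, b10]
  · intro h
    have := h {0} {1} (by decide)
    rw [a01, b10] at this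
    norm_num at this
end

section
/- For two players, anonymity does not imply Mechanism Indifference: the functions on ground set {a,b} defined by f₁(x,∅)=f₂(∅,x)=1 for singletons x, f₁({a,b},∅)=f₂(∅,{a,b})=2, f₁(x,y)=f₂(x,y)=3/4 for disjoint singletons x,y (and 0 when own set is empty), are anonymous, exhibit adverse competition, and have submodular nondecreasing sum, yet f₁(a,b)+f₂(a,b) = 3/2 ≠ 2 = f₁({a,b},∅)+f₂({a,b},∅), so MeI fails. -/
/-- Four times the welfare-table value. -/
def stmt14v (S T : Finset (Fin 2)) : ℤ :=
  if S = ∅ then 0 else if S = Finset.univ then 8 else if T = ∅ then 4 else 3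

lemma stmt14cases (S : Finset (Fin 2)) : S = ∅ ∨ S = {0} ∨ S = {1} ∨ S = Finset.univ := by
  revert S; decide

/-- For two players, anonymity does not imply Mechanism Indifference.
On ground set `{a,b} = Fin 2`, the utilities with `f₁(x,∅)=f₂(∅,x)=1` for singletons,
`f₁({a,b},∅)=f₂(∅,{a,b})=2`, `f₁(x,y)=f₂(x,y)=3/4` for disjoint singletons, and `0`
when the player's own set is empty, are anonymous, exhibit adverse competition, and
have nondecreasing submodular sum, yet
`f₁(a,b)+f₂(a,b) = 3/2 ≠ 2 = f₁({a,b},∅)+f₂({a,b},∅)`: MeI fails. -/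
theorem stmt14 (f₁ f₂ : Finset (Fin 2) → Finset (Fin 2) → ℝ)
    (h1e : ∀ T, f₁ ∅ T = 0) (h2e : ∀ S, f₂ S ∅ = 0)
    (h1s : ∀ x : Fin 2, f₁ {x} ∅ = 1) (h2s : ∀ x : Fin 2, f₂ ∅ {x} = 1)
    (h1f : f₁ Finset.univ ∅ = 2) (h2f : f₂ ∅ Finset.univ = 2)
    (h1xy : ∀ x y : Fin 2, x ≠ y → f₁ {x} {y} = 3 / 4)
    (h2xy : ∀ x y : Fin 2, x ≠ y → f₂ {x} {y} = 3 / 4) :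
    -- anonymity
    (∀ S T : Finset (Fin 2), Disjoint S T → f₁ S T = f₂ T S) ∧
    -- adverse competition
    (∀ S T T' : Finset (Fin 2), T ⊆ T' → Disjoint S T' → f₁ S T' ≤ f₁ S T) ∧
    (∀ S S' T : Finset (Fin 2), S ⊆ S' → Disjoint S' T → f₂ S' T ≤ f₂ S T) ∧
    -- the welfare f₁ + f₂ is nondecreasing in each player's set
    (∀ S S' T : Finset (Fin 2), S ⊆ S' → Disjoint S' T →
      f₁ S T + f₂ S T ≤ f₁ S' T + f₂ S' T) ∧
    (∀ S T T' : Finset (Fin 2), T ⊆ T' → Disjoint S T' →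
      f₁ S T + f₂ S T ≤ f₁ S T' + f₂ S T') ∧
    -- the welfare f₁ + f₂ is submodular in each player's set
    (∀ S S' T : Finset (Fin 2), S ⊆ S' → ∀ e, Disjoint (insert e S') T →
      (f₁ (insert e S') T + f₂ (insert e S') T) - (f₁ S' T + f₂ S' T) ≤
      (f₁ (insert e S) T + f₂ (insert e S) T) - (f₁ S T + f₂ S T)) ∧
    (∀ S T T' : Finset (Fin 2), T ⊆ T' → ∀ e, Disjoint S (insert e T') →
      (f₁ S (insert e T') + f₂ S (insert e T')) - (f₁ S T' + f₂ S T') ≤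
      (f₁ S (insert e T) + f₂ S (insert e T)) - (f₁ S T + f₂ S T)) ∧
    -- Mechanism Indifference fails: two disjoint allocations with the same union
    -- yield different welfare
    f₁ {0} {1} + f₂ {0} {1} = 3 / 2 ∧
    f₁ Finset.univ ∅ + f₂ Finset.univ ∅ = 2 ∧
    f₁ {0} {1} + f₂ {0} {1} ≠ f₁ Finset.univ ∅ + f₂ Finset.univ ∅ := by
  have n0 : ({0} : Finset (Fin 2)) ≠ Finset.univ := by decide
  have n1 : ({1} : Finset (Fin 2)) ≠ Finset.univ := by decide
  have nu : (Finset.univ : Finset (Fin 2)) ≠ ∅ := by decide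
  have e1 : ∀ S T : Finset (Fin 2), Disjoint S T → f₁ S T = (stmt14v S T : ℝ) / 4 := by
    intro S T hd
    rcases stmt14cases S with rfl | rfl | rfl | rfl <;>
      rcases stmt14cases T with rfl | rfl | rfl | rfl <;>
      first
      | (exfalso; revert hd; decide)
      | (simp [stmt14v, n0, n1, nu, h1e, h1s, h1f,
          h1xy 0 1 (by decide), h1xy 1 0 (by decide)] <;> norm_num)
  have e2 : ∀ S T : Finset (Fin 2), Disjoint S T → f₂ S T = (stmt14v T S : ℝ) / 4 := by
    intro S T hd
    rcases stmt14cases S with rfl | rfl | rfl | rfl <;>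
      rcases stmt14cases T with rfl | rfl | rfl | rfl <;>
      first
      | (exfalso; revert hd; decide)
      | (simp [stmt14v, n0, n1, nu, h2e, h2s, h2f,
          h2xy 0 1 (by decide), h2xy 1 0 (by decide)] <;> norm_num)
  refine ⟨?_, ?_, ?_, ?_, ?_, ?_, ?_, ?_, ?_, ?_⟩
  · intro S T hd
    rw [e1 S T hd, e2 T S hd.symm]
  · intro S T T' hTT' hd
    rw [e1 S T' hd, e1 S T (hd.mono_right hTT')]
    have key : stmt14v S T' ≤ stmt14v S T := by
      revert hTT' hd; revert S T T'; decide
    have key' : (stmt14v S T' : ℝ) ≤ stmt14v S T := by exact_mod_cast key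
    linarith
  · intro S S' T hSS' hd
    rw [e2 S' T hd, e2 S T (hd.mono_left hSS')]
    have key : stmt14v T S' ≤ stmt14v T S := by
      revert hSS' hd; revert S S' T; decide
    have key' : (stmt14v T S' : ℝ) ≤ stmt14v T S := by exact_mod_cast key
    linarith
  · intro S S' T hSS' hd
    have hd' := hd.mono_left hSS'
    rw [e1 S' T hd, e2 S' T hd, e1 S T hd', e2 S T hd']
    have key : stmt14v S T + stmt14v T S ≤ stmt14v S' T + stmt14v T S' := by
      revert hSS' hd; revert S S' T; decide
    have key' : ((stmt14v S T : ℝ) + stmt14v T S) ≤ (stmt14v S' T : ℝ) + stmt14v T S' := by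
      exact_mod_cast key
    linarith
  · intro S T T' hTT' hd
    have hd' := hd.mono_right hTT'
    rw [e1 S T' hd, e2 S T' hd, e1 S T hd', e2 S T hd']
    have key : stmt14v S T + stmt14v T S ≤ stmt14v S T' + stmt14v T' S := by
      revert hTT' hd; revert S T T'; decide
    have key' : ((stmt14v S T : ℝ) + stmt14v T S) ≤ (stmt14v S T' : ℝ) + stmt14v T' S := by
      exact_mod_cast key
    linarith
  · intro S S' T hSS' e hd
    have h1 : Disjoint S' T := hd.mono_left (Finset.subset_insert e S')
    have h2 : Disjoint (insert e S) T := hd.mono_left (Finset.insert_subset_insert e hSS')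
    have h3 : Disjoint S T := h1.mono_left hSS'
    rw [e1 _ _ hd, e2 _ _ hd, e1 _ _ h1, e2 _ _ h1, e1 _ _ h2, e2 _ _ h2, e1 _ _ h3, e2 _ _ h3]
    have key : (stmt14v (insert e S') T + stmt14v T (insert e S')) - (stmt14v S' T + stmt14v T S') ≤
        (stmt14v (insert e S) T + stmt14v T (insert e S)) - (stmt14v S T + stmt14v T S) := by
      revert hSS' hd; revert S S' T e; decide
    have key' : ((stmt14v (insert e S') T : ℝ) + stmt14v T (insert e S')) - ((stmt14v S' T : ℝ) + stmt14v T S') ≤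
        ((stmt14v (insert e S) T : ℝ) + stmt14v T (insert e S)) - ((stmt14v S T : ℝ) + stmt14v T S) := by
      exact_mod_cast key
    linarith
  · intro S T T' hTT' e hd
    have h1 : Disjoint S T' := hd.mono_right (Finset.subset_insert e T')
    have h2 : Disjoint S (insert e T) := hd.mono_right (Finset.insert_subset_insert e hTT')
    have h3 : Disjoint S T := h1.mono_right hTT'
    rw [e1 _ _ hd, e2 _ _ hd, e1 _ _ h1, e2 _ _ h1, e1 _ _ h2, e2 _ _ h2, e1 _ _ h3, e2 _ _ h3]
    have key : (stmt14v S (insert e T') + stmt14v (insert e T') S) - (stmt14v S T' + stmt14v T' S) ≤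
        (stmt14v S (insert e T) + stmt14v (insert e T) S) - (stmt14v S T + stmt14v T S) := by
      revert hTT' hd; revert S T T' e; decide
    have key' : ((stmt14v S (insert e T') : ℝ) + stmt14v (insert e T') S) - ((stmt14v S T' : ℝ) + stmt14v T' S) ≤
        ((stmt14v S (insert e T) : ℝ) + stmt14v (insert e T) S) - ((stmt14v S T : ℝ) + stmt14v T S) := by
      exact_mod_cast key
    linarith
  · rw [h1xy 0 1 (by decide), h2xy 0 1 (by decide)]; norm_num
  · rw [h1f, h2e]; norm_num
  · rw [h1xy 0 1 (by decide), h2xy 0 1 (by decide), h1f, h2e]; norm_num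
end

section
/- (Disjoint locally greedy, Lemma bounding residual optimum) Let w be a monotone nondecreasing submodular welfare function over k-tuples of disjoint sets, and let (I₁,...,I_k) be the output of the locally greedy algorithm with disjointness (each step adds to the designated player's set the best element not yet allocated to anyone). Let (O₁⁰,...,O_k⁰) be any valid allocation with |Oᵢ⁰| ≤ |Iᵢ| and Oᵢ⁰ disjoint from ⋃_{j≠i} I_j for all i. Then w(O₁⁰,...,O_k⁰) ≤ 2·w(I₁,...,I_k). -/
lemma lemA {U : Type*} [DecidableEq U] {k : ℕ}
    (w : (Fin k → Finset U) → ℝ)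
    (hsub : ∀ A B : Fin k → Finset U, (∀ i, A i ⊆ B i) → ∀ (i : Fin k) (e : U),
      w (Function.update B i (insert e (B i))) - w B ≤
      w (Function.update A i (insert e (A i))) - w A) :
    ∀ (n : ℕ) (A B : Fin k → Finset U), (∀ i, A i ⊆ B i) →
      (∑ i, (B i \ A i).card) = n →
      w B ≤ w A + ∑ i, ∑ e ∈ B i \ A i,
        (w (Function.update A i (insert e (A i))) - w A) := by
  intro n
  induction n with
  | zero =>
    intro A B hAB hm
    have hAeB : A = B := by
      funext i
      have : (B i \ A i).card = 0 := by
        have := Finset.sum_eq_zero_iff.mp hm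
        exact this i (Finset.mem_univ i)
      have hsub' : B i ⊆ A i :=
        Finset.sdiff_eq_empty_iff_subset.mp (Finset.card_eq_zero.mp this)
      exact Finset.Subset.antisymm (hAB i) hsub'
    subst hAeB
    simp
  | succ n ih =>
    intro A B hAB hm
    have hex : ∃ i : Fin k, (B i \ A i).card ≠ 0 := by
      by_contra h
      push_neg at h
      have : (∑ i, (B i \ A i).card) = 0 := Finset.sum_eq_zero (fun i _ => h i)
      omega
    obtain ⟨i, hi⟩ := hex
    obtain ⟨e, he⟩ := Finset.card_ne_zero.mp hi |>.exists_mem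
    have heB : e ∈ B i := (Finset.mem_sdiff.mp he).1
    have heA : e ∉ A i := (Finset.mem_sdiff.mp he).2
    set A' := Function.update A i (insert e (A i)) with hA'def
    have hAA' : ∀ i', A i' ⊆ A' i' := by
      intro i'
      by_cases h : i' = i
      · subst h; simp [hA'def, Finset.subset_insert]
      · simp [hA'def, Function.update_of_ne h]
    have hA'B : ∀ i', A' i' ⊆ B i' := by
      intro i'
      by_cases h : i' = i
      · subst h; simp only [hA'def, Function.update_self]
        exact Finset.insert_subset heB (hAB i')
      · simp only [hA'def, Function.update_of_ne h]; exact hAB i'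
    have hsdiff : B i \ A' i = (B i \ A i).erase e := by
      simp only [hA'def, Function.update_self]
      exact Finset.sdiff_insert (B i) (A i) e
    have hsdiff' : ∀ i', i' ≠ i → B i' \ A' i' = B i' \ A i' := by
      intro i' h; simp [hA'def, Function.update_of_ne h]
    have hm' : (∑ i', (B i' \ A' i').card) = n := by
      have h1 : (B i \ A' i).card + ∑ i' ∈ Finset.univ.erase i, (B i' \ A' i').card
          = ∑ i', (B i' \ A' i').card :=
        Finset.add_sum_erase _ (fun i' => (B i' \ A' i').card) (Finset.mem_univ i)
      have h2 : (B i \ A i).card + ∑ i' ∈ Finset.univ.erase i, (B i' \ A i').card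
          = ∑ i', (B i' \ A i').card :=
        Finset.add_sum_erase _ (fun i' => (B i' \ A i').card) (Finset.mem_univ i)
      have h3 : ∑ i' ∈ Finset.univ.erase i, (B i' \ A' i').card
          = ∑ i' ∈ Finset.univ.erase i, (B i' \ A i').card := by
        refine Finset.sum_congr rfl (fun i' hi' => ?_)
        rw [hsdiff' i' (Finset.mem_erase.mp hi').1]
      have h4 : (B i \ A' i).card = (B i \ A i).card - 1 := by
        rw [hsdiff]; exact Finset.card_erase_of_mem he
      have h5 : 1 ≤ (B i \ A i).card := Finset.card_pos.mpr ⟨e, he⟩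
      omega
    have key := ih A' B hA'B hm'
    -- replace marginals at A' by marginals at A
    have hstep2 : ∑ i', ∑ e' ∈ B i' \ A' i',
          (w (Function.update A' i' (insert e' (A' i'))) - w A')
        ≤ ∑ i', ∑ e' ∈ B i' \ A' i',
          (w (Function.update A i' (insert e' (A i'))) - w A) := by
      refine Finset.sum_le_sum (fun i' _ => Finset.sum_le_sum (fun e' _ => ?_))
      exact hsub A A' hAA' i' e'
    set ρ : Fin k → U → ℝ := fun i' e' => w (Function.update A i' (insert e' (A i'))) - w A
      with hρdef
    have hwA' : w A' = w A + ρ i e := by simp [hρdef, hA'def]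
    have hsum_eq : ∑ i', ∑ e' ∈ B i' \ A' i', ρ i' e'
        = (∑ i', ∑ e' ∈ B i' \ A i', ρ i' e') - ρ i e := by
      have h1 : (∑ e' ∈ B i \ A' i, ρ i e') + ∑ i' ∈ Finset.univ.erase i, ∑ e' ∈ B i' \ A' i', ρ i' e'
          = ∑ i', ∑ e' ∈ B i' \ A' i', ρ i' e' :=
        Finset.add_sum_erase _ (fun i' => ∑ e' ∈ B i' \ A' i', ρ i' e') (Finset.mem_univ i)
      have h2 : (∑ e' ∈ B i \ A i, ρ i e') + ∑ i' ∈ Finset.univ.erase i, ∑ e' ∈ B i' \ A i', ρ i' e'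
          = ∑ i', ∑ e' ∈ B i' \ A i', ρ i' e' :=
        Finset.add_sum_erase _ (fun i' => ∑ e' ∈ B i' \ A i', ρ i' e') (Finset.mem_univ i)
      have h3 : ∑ i' ∈ Finset.univ.erase i, ∑ e' ∈ B i' \ A' i', ρ i' e'
          = ∑ i' ∈ Finset.univ.erase i, ∑ e' ∈ B i' \ A i', ρ i' e' := by
        refine Finset.sum_congr rfl (fun i' hi' => ?_)
        rw [hsdiff' i' (Finset.mem_erase.mp hi').1]
      have h4 : ρ i e + ∑ e' ∈ (B i \ A i).erase e, ρ i e' = ∑ e' ∈ B i \ A i, ρ i e' :=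
        Finset.add_sum_erase _ _ he
      rw [hsdiff] at h1
      linarith
    calc w B ≤ w A' + ∑ i', ∑ e' ∈ B i' \ A' i',
          (w (Function.update A' i' (insert e' (A' i'))) - w A') := key
      _ ≤ w A' + ∑ i', ∑ e' ∈ B i' \ A' i', ρ i' e' := by linarith
      _ = w A + ∑ i', ∑ e' ∈ B i' \ A i', ρ i' e' := by rw [hwA', hsum_eq]; ring


/-- Disjoint locally greedy, residual-optimum lemma: Let `w` be a
monotone nondecreasing submodular welfare function over `k`-tuples of sets with
`w(∅,…,∅)=0`, and let `(I₁,…,I_k) = S N` be the output of the locally greedy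
algorithm with disjointness: at each step `j` the designated player `π j` receives
the element of maximum marginal gain among elements not yet allocated to anyone.
Let `(O₁⁰,…,O_k⁰)` be any valid (pairwise disjoint) allocation with
`|Oᵢ⁰| ≤ |Iᵢ|` and `Oᵢ⁰` disjoint from `⋃_{j≠i} I_j` for all `i`.
Then `w(O₁⁰,…,O_k⁰) ≤ 2·w(I₁,…,I_k)`. -/
theorem stmt16 {U : Type*} [Fintype U] [DecidableEq U] {k : ℕ}
    (w : (Fin k → Finset U) → ℝ)
    (hnonneg : ∀ A, 0 ≤ w A)
    (hempty : w (fun _ => ∅) = 0)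
    (hmono : ∀ A B : Fin k → Finset U, (∀ i, A i ⊆ B i) → w A ≤ w B)
    (hsub : ∀ A B : Fin k → Finset U, (∀ i, A i ⊆ B i) → ∀ (i : Fin k) (e : U),
      w (Function.update B i (insert e (B i))) - w B ≤
      w (Function.update A i (insert e (A i))) - w A)
    (N : ℕ) (π : ℕ → Fin k)
    (S : ℕ → Fin k → Finset U)
    (hS0 : S 0 = fun _ => ∅)
    (hstep : ∀ j < N, ∃ c : U, (∀ i, c ∉ S j i) ∧
      S (j + 1) = Function.update (S j) (π j) (insert c (S j (π j))) ∧
      ∀ e : U, (∀ i, e ∉ S j i) →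
        w (Function.update (S j) (π j) (insert e (S j (π j)))) - w (S j) ≤
        w (S (j + 1)) - w (S j))
    (O : Fin k → Finset U)
    (hOdisj : ∀ i j : Fin k, i ≠ j → Disjoint (O i) (O j))
    (hOcard : ∀ i, (O i).card ≤ (S N i).card)
    (hOI : ∀ i j : Fin k, i ≠ j → Disjoint (O i) (S N j)) :
    w O ≤ 2 * w (S N) := by
  -- one-step subset
  have hstep_sub : ∀ j < N, ∀ i, S j i ⊆ S (j + 1) i := by
    intro j hj i
    obtain ⟨c, hc, hupd, _⟩ := hstep j hj
    rw [hupd]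
    by_cases h : i = π j
    · subst h; simp [Finset.subset_insert]
    · simp [Function.update_of_ne h]
  -- monotonicity up to N
  have hmonoS : ∀ b ≤ N, ∀ a ≤ b, ∀ i, S a i ⊆ S b i := by
    intro b
    induction b with
    | zero =>
      intro _ a ha i
      have : a = 0 := Nat.le_zero.mp ha
      subst this; exact Finset.Subset.refl _
    | succ b ihb =>
      intro hbN a ha i
      by_cases h : a = b + 1
      · subst h; exact Finset.Subset.refl _
      · exact (ihb (by omega) a (by omega) i).trans (hstep_sub b (by omega) i)
  -- nonnegative gains
  have hgain : ∀ j < N, w (S j) ≤ w (S (j + 1)) := fun j hj =>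
    hmono _ _ (hstep_sub j hj)
  -- cardinality of greedy sets counts steps
  have hcardS : ∀ n ≤ N, ∀ i,
      (S n i).card = ((Finset.range n).filter (fun j => π j = i)).card := by
    intro n
    induction n with
    | zero => intro _ i; simp [hS0]
    | succ n ihn =>
      intro hn i
      obtain ⟨c, hc, hupd, _⟩ := hstep n (by omega)
      have hr : (Finset.range (n + 1)).filter (fun j => π j = i)
          = if π n = i then insert n ((Finset.range n).filter (fun j => π j = i))
            else (Finset.range n).filter (fun j => π j = i) := by
        rw [Finset.range_add_one, Finset.filter_insert]
      by_cases h : π n = i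
      · have : S (n + 1) i = insert c (S n i) := by
          rw [hupd, ← h, Function.update_self, h]
        rw [this, Finset.card_insert_of_notMem (hc i), hr, if_pos h,
          Finset.card_insert_of_notMem (by simp), ihn (by omega) i]
      · have : S (n + 1) i = S n i := by
          rw [hupd, Function.update_of_ne (fun hh => h hh.symm)]
        rw [this, hr, if_neg h, ihn (by omega) i]
  -- marginal gains at the final sets
  set ρ : Fin k → U → ℝ :=
    fun i e => w (Function.update (S N) i (insert e (S N i))) - w (S N) with hρdef
  set g : ℕ → ℝ := fun j => w (S (j + 1)) - w (S j) with hgdef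
  have hg0 : ∀ j < N, 0 ≤ g j := fun j hj => by
    simp only [hgdef, sub_nonneg]; exact hgain j hj
  -- key per-player inequality
  have hkey : ∀ i : Fin k, ∑ e ∈ O i \ S N i, ρ i e
      ≤ ∑ j ∈ (Finset.range N).filter (fun j => π j = i), g j := by
    intro i
    set T := O i \ S N i with hT
    set steps := (Finset.range N).filter (fun j => π j = i) with hsteps
    have hTcard : T.card ≤ steps.card := by
      calc T.card ≤ (O i).card := Finset.card_le_card (Finset.sdiff_subset)
        _ ≤ (S N i).card := hOcard i
        _ = steps.card := hcardS N le_rfl i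
    rcases Finset.eq_empty_or_nonempty T with hTe | hTne
    · rw [hTe]
      simp only [Finset.sum_empty]
      exact Finset.sum_nonneg (fun j hj => hg0 j (Finset.mem_range.mp (Finset.mem_filter.mp hj).1))
    · have hstepsne : steps.Nonempty := Finset.card_pos.mp (lt_of_lt_of_le (Finset.card_pos.mpr hTne) hTcard)
      obtain ⟨j0, hj0s, hj0min⟩ := Finset.exists_min_image steps g hstepsne
      obtain ⟨hj0N, hπj0⟩ := Finset.mem_filter.mp hj0s
      have hj0N : j0 < N := Finset.mem_range.mp hj0N
      have hρ_le : ∀ e ∈ T, ρ i e ≤ g j0 := by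
        intro e heT
        have heO : e ∈ O i := (Finset.mem_sdiff.mp heT).1
        have heNone : ∀ i', e ∉ S N i' := by
          intro i'
          by_cases h : i' = i
          · subst h; exact (Finset.mem_sdiff.mp heT).2
          · exact fun hmem =>
              Finset.disjoint_left.mp (hOI i i' (fun hh => h hh.symm)) heO hmem
        have hej0 : ∀ i', e ∉ S j0 i' := fun i' hmem =>
          heNone i' (hmonoS N le_rfl j0 (le_of_lt hj0N) i' hmem)
        obtain ⟨c, hc, hupd, hbest⟩ := hstep j0 hj0N
        have h1 : w (Function.update (S j0) i (insert e (S j0 i))) - w (S j0) ≤ g j0 := by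
          have := hbest e hej0
          rw [hπj0] at this
          exact this
        have h2 : ρ i e ≤ w (Function.update (S j0) i (insert e (S j0 i))) - w (S j0) :=
          hsub (S j0) (S N) (fun i' => hmonoS N le_rfl j0 (le_of_lt hj0N) i') i e
        linarith
      calc ∑ e ∈ T, ρ i e ≤ ∑ _e ∈ T, g j0 := Finset.sum_le_sum hρ_le
        _ = (T.card : ℝ) * g j0 := by rw [Finset.sum_const, nsmul_eq_mul]
        _ ≤ (steps.card : ℝ) * g j0 :=
            mul_le_mul_of_nonneg_right (Nat.cast_le.mpr hTcard) (hg0 j0 hj0N)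
        _ ≤ ∑ j ∈ steps, g j := by
            have := Finset.card_nsmul_le_sum steps g (g j0) hj0min
            simpa [nsmul_eq_mul] using this
  -- assemble
  have hB : ∀ i, S N i ⊆ S N i ∪ O i := fun i => Finset.subset_union_left
  have hBO : ∀ i, O i ⊆ S N i ∪ O i := fun i => Finset.subset_union_right
  have hsd : ∀ i, (S N i ∪ O i) \ S N i = O i \ S N i := fun i =>
    Finset.union_sdiff_left _ _
  have hexp := lemA w hsub (∑ i, ((S N i ∪ O i) \ S N i).card) (S N)
    (fun i => S N i ∪ O i) hB rfl
  have hexp' : w (fun i => S N i ∪ O i) ≤ w (S N) + ∑ i, ∑ e ∈ O i \ S N i, ρ i e := by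
    calc w (fun i => S N i ∪ O i)
        ≤ w (S N) + ∑ i, ∑ e ∈ (S N i ∪ O i) \ S N i,
            (w (Function.update (S N) i (insert e (S N i))) - w (S N)) := hexp
      _ = w (S N) + ∑ i, ∑ e ∈ O i \ S N i, ρ i e := by
          congr 1
          exact Finset.sum_congr rfl (fun i _ => by rw [hsd i])
  have htel : ∑ j ∈ Finset.range N, g j = w (S N) := by
    rw [hgdef]
    rw [Finset.sum_range_sub (fun j => w (S j))]
    rw [hS0, hempty, sub_zero]
  have hfib : ∑ i : Fin k, ∑ j ∈ (Finset.range N).filter (fun j => π j = i), g j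
      = ∑ j ∈ Finset.range N, g j := Finset.sum_fiberwise (Finset.range N) π g
  have hSig : ∑ i, ∑ e ∈ O i \ S N i, ρ i e ≤ w (S N) := by
    calc ∑ i, ∑ e ∈ O i \ S N i, ρ i e
        ≤ ∑ i : Fin k, ∑ j ∈ (Finset.range N).filter (fun j => π j = i), g j :=
          Finset.sum_le_sum (fun i _ => hkey i)
      _ = w (S N) := by rw [hfib, htel]
  have hO1 : w O ≤ w (fun i => S N i ∪ O i) := hmono _ _ hBO
  linarith
end
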